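/- For (x,y) ∈ R_a with 0 < a ≤ 1/10, the identity (2T₃₃ − tr T̂)·r₁²r₂² = (x−2)(x+2)(x²y²+8x²y⁴−4+4y²) holds, where T = φ(x,y), T̂ is its bottom 2×2 block, tr T̂ = ω₊+ω₋. Consequently T₃₃ > (ω₊+ω₋)/2 when x < 2 and T₃₃ < (ω₊+ω₋)/2 when x > 2 (for (x,y) ∈ R_a). -/

import Mathlib

open Matrix

noncomputable def r1 (x y : ℝ) : ℝ := Real.sqrt (4 + x^2 + 4*x^2*y^2)
noncomputable def r2 (x y : ℝ) : ℝ := Real.sqrt (4 + 4*y^2 + x^2*y^2)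

noncomputable def phi (x y : ℝ) : Matrix (Fin 3) (Fin 3) ℝ :=
  ((r1 x y)^2 * (r2 x y)^2)⁻¹ •
    !![(4 - x^2) * (r2 x y)^2,  2*x*(r2 x y)^3,  0;
       2*x*(r2 x y)^3,  -4*(4 - x^2 - 4*x^2*y^4 + x^4*y^4),  2*y*(r1 x y)^3;
       0,  2*y*(r1 x y)^3,  y^2*(x^2 - 4)*(r1 x y)^2]

noncomputable def TX : Matrix (Fin 3) (Fin 3) ℝ := !![0,1,0;1,0,0;0,0,0]

noncomputable def Delta (x y : ℝ) : ℝ := ((x+2)^2 + 8*x^2*y^2) * ((x-2)^2 + 8*x^2*y^2)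
noncomputable def omegaP (x y : ℝ) : ℝ := (-4 + x^2 + Real.sqrt (Delta x y)) / (2*(r1 x y)^2)
noncomputable def omegaM (x y : ℝ) : ℝ := (-4 + x^2 - Real.sqrt (Delta x y)) / (2*(r1 x y)^2)

set_option maxHeartbeats 1000000 in
theorem stmt_14 (a : ℝ) (ha0 : 0 < a) (ha : a ≤ 1/10) (x y : ℝ)
    (hx : 2 - a ≤ x ∧ x ≤ 2 + a) (hy : |y| ≤ a/10) :
    (2 * phi x y 2 2 - (phi x y 1 1 + phi x y 2 2)) * ((r1 x y)^2 * (r2 x y)^2)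
      = (x - 2) * (x + 2) * (x^2*y^2 + 8*x^2*y^4 - 4 + 4*y^2) ∧
    (x < 2 → (omegaP x y + omegaM x y)/2 < phi x y 2 2) ∧
    (2 < x → phi x y 2 2 < (omegaP x y + omegaM x y)/2) := by
  obtain ⟨hx1, hx2⟩ := hx
  have hS : (r1 x y)^2 = 4 + x^2 + 4*x^2*y^2 := Real.sq_sqrt (by positivity)
  have hT : (r2 x y)^2 = 4 + 4*y^2 + x^2*y^2 := Real.sq_sqrt (by positivity)
  have hSpos : (0:ℝ) < (r1 x y)^2 := by rw [hS]; positivity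
  have hTpos : (0:ℝ) < (r2 x y)^2 := by rw [hT]; positivity
  have hya : |y| ≤ 1/100 := le_trans hy (by linarith)
  have hy2 : y^2 ≤ 1/10000 := by
    have h := sq_abs y
    nlinarith [abs_nonneg y]
  have hxx : x^2 ≤ 441/100 := by nlinarith
  have hN : x^2*y^2 + 8*x^2*y^4 - 4 + 4*y^2 < 0 := by
    nlinarith [sq_nonneg (x*y), sq_nonneg (x*y^2), sq_nonneg y, sq_nonneg (y^2)]
  have hphi22 : phi x y 2 2 = ((r1 x y)^2 * (r2 x y)^2)⁻¹ * (y^2*(x^2 - 4)*(r1 x y)^2) := by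
    simp [phi]
  have hphi11 : phi x y 1 1 = ((r1 x y)^2 * (r2 x y)^2)⁻¹ * (-4*(4 - x^2 - 4*x^2*y^4 + x^4*y^4)) := by
    simp [phi]
  have homega : (omegaP x y + omegaM x y)/2 = (x^2 - 4)/(2*(r1 x y)^2) := by
    unfold omegaP omegaM
    field_simp
    ring
  have hphi22' : phi x y 2 2 = y^2*(x^2 - 4)/(r2 x y)^2 := by
    rw [hphi22]
    field_simp [show r1 x y ≠ 0 from fun h => by simp [h] at hSpos, show r2 x y ≠ 0 from fun h => by simp [h] at hTpos]
  refine ⟨?_, ?_, ?_⟩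
  · rw [hphi22, hphi11]
    field_simp [show r1 x y ≠ 0 from fun h => by simp [h] at hSpos, show r2 x y ≠ 0 from fun h => by simp [h] at hTpos]
    rw [hS]
    ring
  · intro hxl
    have hx4 : x^2 < 4 := by nlinarith
    rw [homega, hphi22']
    rw [div_lt_div_iff₀ (by positivity) hTpos, hS, hT]
    nlinarith [mul_pos (by linarith : (0:ℝ) < 4 - x^2)
      (by linarith : (0:ℝ) < -(x^2*y^2 + 8*x^2*y^4 - 4 + 4*y^2))]
  · intro hxl
    have hx4 : 4 < x^2 := by nlinarith [sq_nonneg (x-2)]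
    rw [homega, hphi22']
    rw [div_lt_div_iff₀ hTpos (by positivity), hS, hT]
    nlinarith [mul_pos (by linarith : (0:ℝ) < x^2 - 4)
      (by linarith : (0:ℝ) < -(x^2*y^2 + 8*x^2*y^4 - 4 + 4*y^2))]
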